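/- For λ, μ > 0 with λ < μ and p ∈ (0,1], A_F(λ,μ,p) − A_L(λ,μ,p) = (2λ³ + λμ² − μλ²)/(μ⁴ − μ²λ²) + 1/μ − 1/(pμ), and this difference has the same sign as p·(2ρ³ − 2ρ² + ρ + 1) − (1 − ρ²) where ρ = λ/μ. -/
import Mathlib


/-- The difference `A_F − A_L` between the FCFS and LCFSP AoPI equals
`(2λ³+λμ²−μλ²)/(μ⁴−μ²λ²) + 1/μ − 1/(pμ)` and has the same sign as
`p·(2ρ³ − 2ρ² + ρ + 1) − (1 − ρ²)` where `ρ = λ/μ`. -/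
theorem aopi_policy_difference_sign (lam mu p : ℝ) (hlam : 0 < lam) (hmu : 0 < mu)
    (hlm : lam < mu) (hp0 : 0 < p) (hp1 : p ≤ 1) :
    ((1 + 1 / p) * (1 / lam) + 1 / mu
        + (2 * lam ^ 3 + lam * mu ^ 2 - mu * lam ^ 2) / (mu ^ 4 - mu ^ 2 * lam ^ 2))
      - ((1 + 1 / p) * (1 / lam) + 1 / (p * mu))
      = (2 * lam ^ 3 + lam * mu ^ 2 - mu * lam ^ 2) / (mu ^ 4 - mu ^ 2 * lam ^ 2)
        + 1 / mu - 1 / (p * mu) ∧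
    (0 < ((1 + 1 / p) * (1 / lam) + 1 / mu
        + (2 * lam ^ 3 + lam * mu ^ 2 - mu * lam ^ 2) / (mu ^ 4 - mu ^ 2 * lam ^ 2))
      - ((1 + 1 / p) * (1 / lam) + 1 / (p * mu))
      ↔ 0 < p * (2 * (lam / mu) ^ 3 - 2 * (lam / mu) ^ 2 + lam / mu + 1)
          - (1 - (lam / mu) ^ 2)) ∧
    (((1 + 1 / p) * (1 / lam) + 1 / mu
        + (2 * lam ^ 3 + lam * mu ^ 2 - mu * lam ^ 2) / (mu ^ 4 - mu ^ 2 * lam ^ 2))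
      - ((1 + 1 / p) * (1 / lam) + 1 / (p * mu)) = 0
      ↔ p * (2 * (lam / mu) ^ 3 - 2 * (lam / mu) ^ 2 + lam / mu + 1)
          - (1 - (lam / mu) ^ 2) = 0) := by
  have hmu' : mu ≠ 0 := ne_of_gt hmu
  have hlam' : lam ≠ 0 := ne_of_gt hlam
  have hp' : p ≠ 0 := ne_of_gt hp0
  have hsq : (0:ℝ) < mu ^ 2 - lam ^ 2 := by nlinarith
  have hden : mu ^ 4 - mu ^ 2 * lam ^ 2 ≠ 0 := by nlinarith
  have hc : (0:ℝ) < mu / (p * (mu ^ 2 - lam ^ 2)) := by positivity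
  have key : ((1 + 1 / p) * (1 / lam) + 1 / mu
        + (2 * lam ^ 3 + lam * mu ^ 2 - mu * lam ^ 2) / (mu ^ 4 - mu ^ 2 * lam ^ 2))
      - ((1 + 1 / p) * (1 / lam) + 1 / (p * mu))
      = (p * (2 * (lam / mu) ^ 3 - 2 * (lam / mu) ^ 2 + lam / mu + 1)
          - (1 - (lam / mu) ^ 2)) * (mu / (p * (mu ^ 2 - lam ^ 2))) := by
    field_simp
    ring
  refine ⟨by ring, ?_, ?_⟩
  · rw [key]
    constructor
    · intro h; nlinarith [mul_pos hc h]
    · intro h; exact mul_pos h hc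
  · rw [key]
    constructor
    · intro h
      rcases mul_eq_zero.mp h with h' | h'
      · exact h'
      · exact absurd h' (ne_of_gt hc)
    · intro h; rw [h, zero_mul]
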